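/- arXiv:1408.0879 — 6 statements merged into one kernel-verified Lean document; each statement's English description precedes it below -/
import Mathlib

section
/- Let Γ be a simple graph with basepoint vertex o and let f : ℕ → ℝ be a nonnegative function. For every walk w in Γ from a vertex u to a vertex v, with u and v in the connected component of o and d(o,u) ≤ d(o,v), the Floyd length of w is at least ∑_{i=d(o,u)}^{d(o,v)−1} f(i). -/
/-- The Floyd length of a walk `w` in a simple graph `Γ` with basepoint `o`, with respect
to a scaling function `f : ℕ → ℝ`: the sum over the darts `(x, y)` of `w` of
`f (min (d o x) (d o y))`, where `d` is the graph distance. -/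
noncomputable def floydLength {V : Type*} (Γ : SimpleGraph V) (o : V) (f : ℕ → ℝ)
    {u v : V} (w : Γ.Walk u v) : ℝ :=
  (w.darts.map (fun d => f (min (Γ.dist o d.fst) (Γ.dist o d.snd)))).sum

private lemma dist_adj_le {V : Type*} (Γ : SimpleGraph V) {o u x : V}
    (hu : Γ.Reachable o u) (h : Γ.Adj u x) : Γ.dist o x ≤ Γ.dist o u + 1 := by
  obtain ⟨p, hp⟩ := hu.exists_walk_length_eq_dist
  calc Γ.dist o x ≤ (p.concat h).length := SimpleGraph.dist_le _
    _ = Γ.dist o u + 1 := by rw [SimpleGraph.Walk.length_concat, hp]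

private lemma floydLength_nonneg {V : Type*} (Γ : SimpleGraph V) (o : V) (f : ℕ → ℝ)
    (hf : ∀ n, 0 ≤ f n) {u v : V} (w : Γ.Walk u v) : 0 ≤ floydLength Γ o f w := by
  apply List.sum_nonneg
  intro a ha
  obtain ⟨d, -, rfl⟩ := List.mem_map.mp ha
  exact hf _

private lemma floydLength_aux {V : Type*} (Γ : SimpleGraph V) (o : V) (f : ℕ → ℝ)
    (hf : ∀ n, 0 ≤ f n) : ∀ {u v : V} (w : Γ.Walk u v), Γ.Reachable o u →
    ∑ i ∈ Finset.Ico (Γ.dist o u) (Γ.dist o v), f i ≤ floydLength Γ o f w := by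
  intro u v w
  induction w with
  | nil => intro _; simp [floydLength]
  | @cons u x v h p ih =>
    intro hu
    have hx : Γ.Reachable o x := hu.trans h.reachable
    have IH := ih hx
    have hL : floydLength Γ o f (SimpleGraph.Walk.cons h p) =
        f (min (Γ.dist o u) (Γ.dist o x)) + floydLength Γ o f p := by
      simp [floydLength]
    rw [hL]
    set a := Γ.dist o u with ha
    set b := Γ.dist o x with hb
    set c := Γ.dist o v with hc
    rcases le_or_gt c a with hca | hac
    · rw [Finset.Ico_eq_empty (by omega)]
      simp only [Finset.sum_empty]
      exact add_nonneg (hf _) (floydLength_nonneg Γ o f hf p)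
    · rcases le_or_gt b a with hba | hab
      · calc ∑ i ∈ Finset.Ico a c, f i ≤ ∑ i ∈ Finset.Ico b c, f i :=
              Finset.sum_le_sum_of_subset_of_nonneg
                (Finset.Ico_subset_Ico hba le_rfl) (fun i _ _ => hf i)
          _ ≤ floydLength Γ o f p := IH
          _ ≤ f (min a b) + floydLength Γ o f p :=
              le_add_of_nonneg_left (hf _)
      · have hb1 : b = a + 1 := by
          have := dist_adj_le Γ hu h
          omega
        have hmin : min a b = a := by omega
        rw [hmin, Finset.sum_eq_sum_Ico_succ_bot hac]
        have : a + 1 = b := hb1.symm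
        rw [this]
        exact add_le_add_right IH _

/-- Lower bound for the Floyd length of any walk: a walk from `u` to `v` has Floyd length
at least `∑_{i = d(o,u)}^{d(o,v) - 1} f i`. -/
theorem floydLength_ge_sum {V : Type*} (Γ : SimpleGraph V) (o : V) (f : ℕ → ℝ)
    (hf : ∀ n, 0 ≤ f n) (u v : V) (hu : Γ.Reachable o u) (hv : Γ.Reachable o v)
    (huv : Γ.dist o u ≤ Γ.dist o v) (w : Γ.Walk u v) :
    ∑ i ∈ Finset.Ico (Γ.dist o u) (Γ.dist o v), f i ≤ floydLength Γ o f w := by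
  exact floydLength_aux Γ o f hf w hu
end

section
/- Let Γ be a simple graph with basepoint vertex o and let f : ℕ → ℝ be a nonnegative function. Let w be a walk from u to v (with u, v in the component of o and d(o,u) ≤ d(o,v)) whose number of edges equals d(o,v) − d(o,u). Then the Floyd length of w equals ∑_{i=d(o,u)}^{d(o,v)−1} f(i), and consequently every walk from u to v has Floyd length at least the Floyd length of w. In particular, any segment of a geodesic ray emanating from o minimizes Floyd length among all walks with the same endpoints, i.e., geodesic rays starting at the basepoint are Floyd geodesics. -/
section aux

variable {V : Type*} {Γ : SimpleGraph V} {o : V}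

/-- Triangle-type inequality via an explicit walk. -/
lemma dist_le_dist_add_walk_length {a b : V} (ho : Γ.Reachable o a) (p : Γ.Walk a b) :
    Γ.dist o b ≤ Γ.dist o a + p.length := by
  obtain ⟨q, hq⟩ := ho.exists_walk_length_eq_dist
  calc Γ.dist o b ≤ (q.append p).length := Γ.dist_le _
    _ = Γ.dist o a + p.length := by rw [SimpleGraph.Walk.length_append, hq]

lemma dist_adj_le_s3 {a c : V} (ho : Γ.Reachable o a) (h : Γ.Adj a c) :
    Γ.dist o c ≤ Γ.dist o a + 1 := by
  simpa using dist_le_dist_add_walk_length ho (SimpleGraph.Walk.cons h SimpleGraph.Walk.nil)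

lemma floydLength_cons (f : ℕ → ℝ) {a c b : V} (h : Γ.Adj a c) (p : Γ.Walk c b) :
    floydLength Γ o f (SimpleGraph.Walk.cons h p) =
      f (min (Γ.dist o a) (Γ.dist o c)) + floydLength Γ o f p := by
  simp [floydLength]

/-- Lower bound: every walk has Floyd length at least the sum over the distance interval. -/
lemma floyd_lb (f : ℕ → ℝ) (hf : ∀ n, 0 ≤ f n) :
    ∀ {a b : V} (p : Γ.Walk a b), Γ.Reachable o a →
      ∑ i ∈ Finset.Ico (Γ.dist o a) (Γ.dist o b), f i ≤ floydLength Γ o f p := by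
  intro a b p
  induction p with
  | nil => intro _; simp [floydLength]
  | @cons a c b h p ih =>
    intro ho
    have hoc : Γ.Reachable o c := ho.trans h.reachable
    rw [floydLength_cons]
    have hsum_nonneg : (0:ℝ) ≤ floydLength Γ o f p := by
      refine List.sum_nonneg ?_
      intro x hx
      simp only [List.mem_map] at hx
      obtain ⟨d, _, rfl⟩ := hx
      exact hf _
    have key : ∑ i ∈ Finset.Ico (Γ.dist o a) (Γ.dist o b), f i ≤
        f (min (Γ.dist o a) (Γ.dist o c)) + ∑ i ∈ Finset.Ico (Γ.dist o c) (Γ.dist o b), f i := by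
      rcases le_or_gt (Γ.dist o c) (Γ.dist o a) with hca | hca
      · have hsub : Finset.Ico (Γ.dist o a) (Γ.dist o b) ⊆
            Finset.Ico (Γ.dist o c) (Γ.dist o b) :=
          Finset.Ico_subset_Ico hca le_rfl
        have := Finset.sum_le_sum_of_subset_of_nonneg hsub (fun i _ _ => hf i)
        linarith [hf (min (Γ.dist o a) (Γ.dist o c))]
      · -- d o c = d o a + 1
        have hle := dist_adj_le_s3 ho h
        have hc : Γ.dist o c = Γ.dist o a + 1 := by omega
        have hmin : min (Γ.dist o a) (Γ.dist o c) = Γ.dist o a := by omega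
        rw [hmin, hc]
        rcases le_or_gt (Γ.dist o b) (Γ.dist o a) with hb | hb
        · rw [Finset.Ico_eq_empty (by omega)]
          have : (0:ℝ) ≤ ∑ i ∈ Finset.Ico (Γ.dist o a + 1) (Γ.dist o b), f i :=
            Finset.sum_nonneg fun i _ => hf i
          simpa using by linarith [hf (Γ.dist o a)]
        · rw [Finset.sum_eq_sum_Ico_succ_bot hb]
      
    calc ∑ i ∈ Finset.Ico (Γ.dist o a) (Γ.dist o b), f i ≤
        f (min (Γ.dist o a) (Γ.dist o c)) + ∑ i ∈ Finset.Ico (Γ.dist o c) (Γ.dist o b), f i := key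
      _ ≤ f (min (Γ.dist o a) (Γ.dist o c)) + floydLength Γ o f p := by
          have := ih hoc; linarith

/-- Exact value for a walk of minimal possible length change. -/
lemma floyd_eq (f : ℕ → ℝ) :
    ∀ {a b : V} (p : Γ.Walk a b), Γ.Reachable o a → Γ.dist o a ≤ Γ.dist o b →
      p.length = Γ.dist o b - Γ.dist o a →
      floydLength Γ o f p = ∑ i ∈ Finset.Ico (Γ.dist o a) (Γ.dist o b), f i := by
  intro a b p
  induction p with
  | nil => intro _ _ _; simp [floydLength]
  | @cons a c b h p ih =>
    intro ho hab hlen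
    have hoc : Γ.Reachable o c := ho.trans h.reachable
    rw [SimpleGraph.Walk.length_cons] at hlen
    have hb : Γ.dist o a < Γ.dist o b := by omega
    have hle := dist_adj_le_s3 ho h
    have htri := dist_le_dist_add_walk_length hoc p
    have hc : Γ.dist o c = Γ.dist o a + 1 := by omega
    have hcb : Γ.dist o c ≤ Γ.dist o b := by omega
    have hplen : p.length = Γ.dist o b - Γ.dist o c := by omega
    rw [floydLength_cons, ih hoc hcb hplen]
    have hmin : min (Γ.dist o a) (Γ.dist o c) = Γ.dist o a := by omega
    rw [hmin, hc, Finset.sum_eq_sum_Ico_succ_bot hb]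

end aux

/-- A walk from `u` to `v` with exactly `d(o,v) - d(o,u)` edges (e.g. a segment of a
geodesic ray emanating from `o`) has Floyd length exactly
`∑_{i = d(o,u)}^{d(o,v) - 1} f i`, and it minimizes Floyd length among all walks from
`u` to `v`; that is, geodesic rays starting at the basepoint are Floyd geodesics. -/
theorem floydLength_eq_sum_and_min {V : Type*} (Γ : SimpleGraph V) (o : V) (f : ℕ → ℝ)
    (hf : ∀ n, 0 ≤ f n) (u v : V) (hu : Γ.Reachable o u) (hv : Γ.Reachable o v)
    (huv : Γ.dist o u ≤ Γ.dist o v) (w : Γ.Walk u v)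
    (hw : w.length = Γ.dist o v - Γ.dist o u) :
    floydLength Γ o f w = ∑ i ∈ Finset.Ico (Γ.dist o u) (Γ.dist o v), f i ∧
      ∀ w' : Γ.Walk u v, floydLength Γ o f w ≤ floydLength Γ o f w' := by
  have heq := floyd_eq (Γ := Γ) (o := o) f w hu huv hw
  refine ⟨heq, fun w' => ?_⟩
  rw [heq]
  exact floyd_lb f hf w' hu
end

section
/- Let F be a free group with free generating set S, let K be any subgroup of F, and let G = F *_K F be the double of F along K, i.e., the amalgamated free product (pushout) of two copies of F along the inclusion of K into each, with canonical homomorphisms ι₁, ι₂ : F → G. Let X = ι₁(S) ∪ ι₂(S) together with inverses be the symmetric generating set of G. Then for every u ∈ F, the word length of ι₁(u) in G with respect to X equals the free-group word length |u| of u with respect to S, and similarly for ι₂. In particular, ι₁ and ι₂ are injective and isometric embeddings for the word metrics. -/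
/-- The word length of `g` with respect to a generating set `X` (symmetrized, i.e.
inverses of elements of `X` are allowed as letters): the least length of a word in
`X ∪ X⁻¹` representing `g`. -/
noncomputable def wordLength {G : Type*} [Group G] (X : Set G) (g : G) : ℕ :=
  sInf {n | ∃ l : List G, (∀ x ∈ l, x ∈ X ∨ x⁻¹ ∈ X) ∧ l.length = n ∧ l.prod = g}

/-- The double `F *_K F` of the free group `F = FreeGroup α` along the subgroup `K`:
the pushout of the inclusion `K ↪ F` with itself. -/
abbrev FreeDouble {α : Type*} (K : Subgroup (FreeGroup α)) : Type _ :=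
  Monoid.PushoutI (fun _ : Bool => K.subtype)

/-- The two canonical homomorphisms `ι₁, ι₂ : F →* F *_K F` (indexed by `Bool`). -/
abbrev FreeDouble.incl {α : Type*} (K : Subgroup (FreeGroup α)) (i : Bool) :
    FreeGroup α →* FreeDouble K :=
  Monoid.PushoutI.of (φ := fun _ : Bool => K.subtype) i

/-- The symmetric generating set `X = ι₁(S) ∪ ι₂(S)` of `F *_K F`, where `S` is the
free generating set of `F`. -/
def FreeDouble.gens {α : Type*} (K : Subgroup (FreeGroup α)) : Set (FreeDouble K) :=
  Set.range (fun s : α => FreeDouble.incl K true (FreeGroup.of s)) ∪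
    Set.range (fun s : α => FreeDouble.incl K false (FreeGroup.of s))

/-- hom applied to mk L -/
lemma hom_mk {α G : Type*} [Group G] (f : FreeGroup α →* G) (L : List (α × Bool)) :
    f (FreeGroup.mk L) =
      (L.map fun x => cond x.2 (f (FreeGroup.of x.1)) (f (FreeGroup.of x.1))⁻¹).prod := by
  rw [FreeGroup.lift_unique (f := fun a => f (FreeGroup.of a)) f (fun x => rfl)]
  exact FreeGroup.lift_mk

/-- retraction -/
noncomputable def FreeDouble.retr {α : Type*} (K : Subgroup (FreeGroup α)) :
    FreeDouble K →* FreeGroup α :=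
  Monoid.PushoutI.lift (fun _ => MonoidHom.id _) K.subtype (fun _ => rfl)

lemma retr_incl {α : Type*} (K : Subgroup (FreeGroup α)) (i : Bool) (u : FreeGroup α) :
    FreeDouble.retr K (FreeDouble.incl K i u) = u := by
  simp [FreeDouble.retr, Monoid.PushoutI.lift_of]

lemma incl_of_mem_gens {α : Type*} (K : Subgroup (FreeGroup α)) (i : Bool) (a : α) :
    FreeDouble.incl K i (FreeGroup.of a) ∈ FreeDouble.gens K := by
  cases i
  · exact Or.inr ⟨a, rfl⟩
  · exact Or.inl ⟨a, rfl⟩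

lemma retr_gens_norm {α : Type*} [DecidableEq α] (K : Subgroup (FreeGroup α)) (x : FreeDouble K)
    (hx : x ∈ FreeDouble.gens K ∨ x⁻¹ ∈ FreeDouble.gens K) :
    (FreeDouble.retr K x).norm ≤ 1 := by
  rcases hx with hx | hx
  · rcases hx with ⟨s, hs⟩ | ⟨s, hs⟩ <;> dsimp only at hs <;> rw [← hs, retr_incl, FreeGroup.norm_of]
  · rcases hx with ⟨s, hs⟩ | ⟨s, hs⟩ <;> dsimp only at hs <;>
    · have h2 : FreeDouble.retr K x⁻¹ = FreeGroup.of s := by rw [← hs, retr_incl]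
      rw [map_inv] at h2
      rw [← inv_inv (FreeDouble.retr K x), h2, FreeGroup.norm_inv_eq, FreeGroup.norm_of]

lemma norm_retr_prod_le {α : Type*} [DecidableEq α] (K : Subgroup (FreeGroup α)) :
    ∀ l : List (FreeDouble K), (∀ x ∈ l, x ∈ FreeDouble.gens K ∨ x⁻¹ ∈ FreeDouble.gens K) →
      (FreeDouble.retr K l.prod).norm ≤ l.length := by
  intro l
  induction l with
  | nil => simp [FreeGroup.norm_one]
  | cons a l ih =>
    intro h
    rw [List.prod_cons, map_mul, List.length_cons]
    calc (FreeDouble.retr K a * FreeDouble.retr K l.prod).norm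
        ≤ (FreeDouble.retr K a).norm + (FreeDouble.retr K l.prod).norm :=
          FreeGroup.norm_mul_le _ _
      _ ≤ 1 + l.length := add_le_add (retr_gens_norm K a (h a (List.mem_cons_self (a := a) (l := l))))
          (ih fun x hx => h x (List.mem_cons_of_mem a hx))
      _ = l.length + 1 := Nat.add_comm _ _

lemma norm_mem {α : Type*} [DecidableEq α] (K : Subgroup (FreeGroup α)) (i : Bool) (u : FreeGroup α) :
    u.norm ∈ {n | ∃ l : List (FreeDouble K),
      (∀ x ∈ l, x ∈ FreeDouble.gens K ∨ x⁻¹ ∈ FreeDouble.gens K) ∧ l.length = n ∧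
        l.prod = FreeDouble.incl K i u} := by
  refine ⟨u.toWord.map fun x => cond x.2 (FreeDouble.incl K i (FreeGroup.of x.1))
      (FreeDouble.incl K i (FreeGroup.of x.1))⁻¹, ?_, by simp [FreeGroup.norm], ?_⟩
  · intro x hx
    simp only [List.mem_map] at hx
    obtain ⟨⟨a, b⟩, _, rfl⟩ := hx
    cases b
    · right; simpa using incl_of_mem_gens K i a
    · left; exact incl_of_mem_gens K i a
  · rw [← hom_mk (FreeDouble.incl K i) u.toWord, FreeGroup.mk_toWord]

/-- Both copies of the free group `F` are isometrically embedded in the double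
`G = F *_K F`: the word length of `ιᵢ u` in `G` with respect to `X` equals the
free-group word length `|u|`, and each `ιᵢ` is injective. -/
theorem freeDouble_isometric_embedding {α : Type*} [DecidableEq α]
    (K : Subgroup (FreeGroup α)) :
    (∀ i : Bool, ∀ u : FreeGroup α,
      wordLength (FreeDouble.gens K) (FreeDouble.incl K i u) = u.norm) ∧
    (∀ i : Bool, Function.Injective (FreeDouble.incl K i)) := by
  constructor
  · intro i u
    apply le_antisymm
    · exact Nat.sInf_le (norm_mem K i u)
    · refine le_csInf ⟨_, norm_mem K i u⟩ ?_
      rintro n ⟨l, hl, rfl, hprod⟩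
      have := norm_retr_prod_le K l hl
      rwa [hprod, retr_incl] at this
  · intro i
    exact Function.LeftInverse.injective (retr_incl K i)
end

section
/- Let F be a free group with free generating set S, K a subgroup of F, and G = F *_K F the double with canonical homomorphisms ι₁, ι₂ : F → G and symmetric generating set X = ι₁(S) ∪ ι₂(S) together with inverses. Then for every g ∈ G there exist k ∈ ℕ, elements v₁, …, v_k ∈ F, and an alternating assignment ε : {1,…,k} → {1,2} (ε_{i+1} ≠ ε_i for all i), with v_i ∉ K for every i whenever k ≥ 2, such that g = ι_{ε₁}(v₁)·ι_{ε₂}(v₂)⋯ι_{ε_k}(v_k) and the word length of g in G with respect to X equals |v₁| + |v₂| + ⋯ + |v_k|. -/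
namespace FreeDoubleAux

variable {α : Type*} [DecidableEq α] (K : Subgroup (FreeGroup α))

def P (l : List (Bool × FreeGroup α)) : FreeDouble K :=
  (l.map (fun p => FreeDouble.incl K p.1 p.2)).prod

def N (l : List (Bool × FreeGroup α)) : ℕ :=
  (l.map (fun p => p.2.norm)).sum

@[simp] lemma P_nil : P K ([] : List (Bool × FreeGroup α)) = 1 := rfl
@[simp] lemma P_cons (p : Bool × FreeGroup α) (l) :
    P K (p :: l) = FreeDouble.incl K p.1 p.2 * P K l := by
  simp [P]
@[simp] lemma N_nil : N ([] : List (Bool × FreeGroup α)) = 0 := rfl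
@[simp] lemma N_cons (p : Bool × FreeGroup α) (l) :
    N (p :: l) = p.2.norm + N l := by simp [N]

lemma P_append (l₁ l₂ : List (Bool × FreeGroup α)) :
    P K (l₁ ++ l₂) = P K l₁ * P K l₂ := by simp [P]

lemma N_append (l₁ l₂ : List (Bool × FreeGroup α)) :
    N (l₁ ++ l₂) = N l₁ + N l₂ := by simp [N]

lemma incl_congr {v : FreeGroup α} (hv : v ∈ K) (b b' : Bool) :
    FreeDouble.incl K b v = FreeDouble.incl K b' v := by
  have h1 := Monoid.PushoutI.of_apply_eq_base (φ := fun _ : Bool => K.subtype) b ⟨v, hv⟩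
  have h2 := Monoid.PushoutI.of_apply_eq_base (φ := fun _ : Bool => K.subtype) b' ⟨v, hv⟩
  exact h1.trans h2.symm

def Good (l : List (Bool × FreeGroup α)) : Prop :=
  l.Chain' (fun p q => p.1 ≠ q.1) ∧ (2 ≤ l.length → ∀ p ∈ l, p.2 ∉ K)

lemma good_singleton (p : Bool × FreeGroup α) : Good K [p] := by
  constructor
  · simp [List.Chain']
  · intro h; simp at h

lemma cons_good (b : Bool) (v : FreeGroup α) (l : List (Bool × FreeGroup α))
    (hl : Good K l) :
    ∃ l', Good K l' ∧ P K l' = FreeDouble.incl K b v * P K l ∧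
      N l' ≤ v.norm + N l := by
  classical
  match l with
  | [] =>
      exact ⟨[(b, v)], good_singleton K _, by simp, by simp⟩
  | [(b', w)] =>
      by_cases h : b = b' ∨ v ∈ K
      · have key : FreeDouble.incl K b v = FreeDouble.incl K b' v := by
          rcases h with h | h
          · rw [h]
          · exact incl_congr K h b b'
        refine ⟨[(b', v * w)], good_singleton K _, ?_, ?_⟩
        · simp [key, map_mul, mul_assoc]
        · simpa using FreeGroup.norm_mul_le v w
      · push_neg at h
        by_cases hw : w ∈ K
        · have key : FreeDouble.incl K b' w = FreeDouble.incl K b w :=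
            incl_congr K hw b' b
          refine ⟨[(b, v * w)], good_singleton K _, ?_, ?_⟩
          · simp [← key, map_mul, mul_assoc]
          · simpa using FreeGroup.norm_mul_le v w
        · refine ⟨[(b, v), (b', w)], ⟨?_, ?_⟩, by simp [mul_assoc], by simp⟩
          · simp [List.Chain', List.isChain_cons_cons, h.1]
          · intro _ p hp
            simp only [List.mem_cons, List.mem_singleton] at hp
            rcases hp with rfl | rfl | hp
            · exact h.2
            · exact hw
            · simp at hp
  | (b', w) :: (b'', u) :: rest =>
      have hmem : ∀ p ∈ (b', w) :: (b'', u) :: rest, p.2 ∉ K :=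
        hl.2 (by simp)
      have hchain := hl.1
      unfold List.Chain' at hchain; rw [List.isChain_cons_cons] at hchain
      have hb'b'' : b' ≠ b'' := hchain.1
      have hchain2 := hchain.2
      by_cases h : b = b' ∨ v ∈ K
      · have key : FreeDouble.incl K b v = FreeDouble.incl K b' v := by
          rcases h with h | h
          · rw [h]
          · exact incl_congr K h b b'
        by_cases hvw : v * w ∈ K
        · -- merge three factors into the (b'') one
          refine ⟨(b'', v * w * u) :: rest, ⟨?_, ?_⟩, ?_, ?_⟩
          · rcases rest with _ | ⟨q, rest⟩
            · simp [List.Chain']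
            · unfold List.Chain'; rw [List.isChain_cons_cons] at hchain2 ⊢
              exact ⟨hchain2.1, hchain2.2⟩
          · intro _ p hp
            rcases List.mem_cons.1 hp with rfl | hp
            · intro hk
              apply hmem (b'', u) (by simp)
              have huk : u = (v * w)⁻¹ * (v * w * u) := by group
              rw [huk]
              exact K.mul_mem (K.inv_mem hvw) hk
            · exact hmem p (by simp [hp])
          · have key2 : FreeDouble.incl K b'' (v * w) = FreeDouble.incl K b' (v * w) :=
              incl_congr K hvw b'' b'
            simp only [P_cons]
            rw [key,
              show FreeDouble.incl K b'' (v * w * u)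
                  = FreeDouble.incl K b'' (v * w) * FreeDouble.incl K b'' u from
                map_mul _ _ _,
              key2, map_mul]
            simp [mul_assoc]
          · simp only [N_cons]
            have h1 := FreeGroup.norm_mul_le (v * w) u
            have h2 := FreeGroup.norm_mul_le v w
            omega
        · refine ⟨(b', v * w) :: (b'', u) :: rest, ⟨?_, ?_⟩, ?_, ?_⟩
          · unfold List.Chain'; rw [List.isChain_cons_cons]
            exact ⟨hb'b'', hchain2⟩
          · intro _ p hp
            rcases List.mem_cons.1 hp with rfl | hp
            · exact hvw
            · exact hmem p (by simp [hp])
          · simp only [P_cons, map_mul, key, mul_assoc]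
          · simp only [N_cons]
            have h2 := FreeGroup.norm_mul_le v w
            omega
      · push_neg at h
        refine ⟨(b, v) :: (b', w) :: (b'', u) :: rest, ⟨?_, ?_⟩, by simp, by simp⟩
        · unfold List.Chain'; rw [List.isChain_cons_cons]
          exact ⟨h.1, hl.1⟩
        · intro _ p hp
          rcases List.mem_cons.1 hp with rfl | hp
          · exact h.2
          · exact hmem p hp

lemma letters_good (ltr : List (FreeDouble K))
    (hltr : ∀ x ∈ ltr, x ∈ FreeDouble.gens K ∨ x⁻¹ ∈ FreeDouble.gens K) :
    ∃ l, Good K l ∧ P K l = ltr.prod ∧ N l ≤ ltr.length := by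
  induction ltr with
  | nil => exact ⟨[], ⟨by simp [List.Chain'], by simp⟩, by simp, by simp⟩
  | cons x t ih =>
      obtain ⟨l, hg, hp, hn⟩ := ih (fun y hy => hltr y (by simp [hy]))
      have hx := hltr x (by simp)
      have : ∃ (b : Bool) (v : FreeGroup α), v.norm = 1 ∧ x = FreeDouble.incl K b v := by
        rcases hx with (⟨s, hs⟩ | ⟨s, hs⟩) | (⟨s, hs⟩ | ⟨s, hs⟩)
        · exact ⟨true, FreeGroup.of s, FreeGroup.norm_of s, hs.symm⟩
        · exact ⟨false, FreeGroup.of s, FreeGroup.norm_of s, hs.symm⟩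
        · refine ⟨true, (FreeGroup.of s)⁻¹, by simp [FreeGroup.norm_inv_eq], ?_⟩
          have hs' : FreeDouble.incl K true (FreeGroup.of s) = x⁻¹ := hs
          rw [map_inv, hs', inv_inv]
        · refine ⟨false, (FreeGroup.of s)⁻¹, by simp [FreeGroup.norm_inv_eq], ?_⟩
          have hs' : FreeDouble.incl K false (FreeGroup.of s) = x⁻¹ := hs
          rw [map_inv, hs', inv_inv]
      obtain ⟨b, v, hv1, rfl⟩ := this
      obtain ⟨l', hg', hp', hn'⟩ := cons_good K b v l hg
      refine ⟨l', hg', by rw [hp', hp, List.prod_cons], ?_⟩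
      simp only [List.length_cons]
      omega

def letterMap (b : Bool) (p : α × Bool) : FreeDouble K :=
  if p.2 then FreeDouble.incl K b (FreeGroup.of p.1)
  else (FreeDouble.incl K b (FreeGroup.of p.1))⁻¹

lemma letterMap_prod (b : Bool) (L : List (α × Bool)) :
    (L.map (letterMap K b)).prod = FreeDouble.incl K b (FreeGroup.mk L) := by
  induction L with
  | nil =>
      have : FreeGroup.mk ([] : List (α × Bool)) = 1 := FreeGroup.one_eq_mk.symm
      simp [this]
  | cons p L ih =>
      have hsplit : FreeGroup.mk (p :: L) = FreeGroup.mk [p] * FreeGroup.mk L := by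
        rw [FreeGroup.mul_mk]; rfl
      have hone : FreeGroup.mk [p] =
          (if p.2 then FreeGroup.of p.1 else (FreeGroup.of p.1)⁻¹) := by
        rcases p with ⟨a, e⟩
        cases e
        · show FreeGroup.mk [(a, false)] = (FreeGroup.of a)⁻¹
          rw [show (FreeGroup.of a)⁻¹ = FreeGroup.mk (FreeGroup.invRev [(a, true)]) from by
            rw [← FreeGroup.inv_mk]; rfl]
          simp [FreeGroup.invRev]
        · simp [FreeGroup.of]
      rw [List.map_cons, List.prod_cons, ih, hsplit, map_mul, hone]
      rcases p with ⟨a, e⟩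
      cases e <;> simp [letterMap, map_inv]

lemma gens_mem (b : Bool) (s : α) :
    FreeDouble.incl K b (FreeGroup.of s) ∈ FreeDouble.gens K := by
  cases b
  · exact Or.inr ⟨s, rfl⟩
  · exact Or.inl ⟨s, rfl⟩

lemma repr_factor (b : Bool) (v : FreeGroup α) :
    ∃ ltr : List (FreeDouble K),
      (∀ x ∈ ltr, x ∈ FreeDouble.gens K ∨ x⁻¹ ∈ FreeDouble.gens K) ∧
      ltr.length = v.norm ∧ ltr.prod = FreeDouble.incl K b v := by
  refine ⟨v.toWord.map (letterMap K b), ?_, ?_, ?_⟩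
  · intro x hx
    simp only [List.mem_map] at hx
    obtain ⟨p, _, rfl⟩ := hx
    rcases p with ⟨a, e⟩
    cases e
    · right
      show ((FreeDouble.incl K b (FreeGroup.of a))⁻¹)⁻¹ ∈ _
      rw [inv_inv]
      exact gens_mem K b a
    · left
      exact gens_mem K b a
  · simp [FreeGroup.norm]
  · rw [letterMap_prod, FreeGroup.mk_toWord]

lemma repr_list (l : List (Bool × FreeGroup α)) :
    ∃ ltr : List (FreeDouble K),
      (∀ x ∈ ltr, x ∈ FreeDouble.gens K ∨ x⁻¹ ∈ FreeDouble.gens K) ∧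
      ltr.length = N l ∧ ltr.prod = P K l := by
  induction l with
  | nil => exact ⟨[], by simp, by simp, by simp⟩
  | cons p l ih =>
      obtain ⟨ltr, hmem, hlen, hprod⟩ := ih
      obtain ⟨ltr₀, hmem₀, hlen₀, hprod₀⟩ := repr_factor K p.1 p.2
      refine ⟨ltr₀ ++ ltr, ?_, ?_, ?_⟩
      · intro x hx
        rcases List.mem_append.1 hx with hx | hx
        · exact hmem₀ x hx
        · exact hmem x hx
      · simp [hlen₀, hlen]
      · rw [List.prod_append, hprod₀, hprod, P_cons]

lemma exists_decomp (g : FreeDouble K) : ∃ l, P K l = g := by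
  induction g using Monoid.PushoutI.induction_on with
  | of i f => exact ⟨[(i, f)], by simp⟩
  | base h =>
      refine ⟨[(true, (h : FreeGroup α))], ?_⟩
      have h1 := Monoid.PushoutI.of_apply_eq_base (φ := fun _ : Bool => K.subtype) true h
      simpa using h1
  | mul x y hx hy =>
      obtain ⟨lx, hlx⟩ := hx
      obtain ⟨ly, hly⟩ := hy
      exact ⟨lx ++ ly, by rw [P_append, hlx, hly]⟩

end FreeDoubleAux

/-- Every element of the double `G = F *_K F` admits a normal form geodesic word:
`g = ι_{ε₁}(v₁) ⋯ ι_{ε_k}(v_k)` with the factors alternating (`ε_{i+1} ≠ ε_i`), each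
`v_i ∉ K` whenever `k ≥ 2`, and the word length of `g` with respect to
`X = ι₁(S) ∪ ι₂(S)` equal to `|v₁| + ⋯ + |v_k|`. -/
theorem freeDouble_exists_normal_form_geodesic {α : Type*} [DecidableEq α]
    (K : Subgroup (FreeGroup α)) (g : FreeDouble K) :
    ∃ l : List (Bool × FreeGroup α),
      l.Chain' (fun p q => p.1 ≠ q.1) ∧
      (2 ≤ l.length → ∀ p ∈ l, p.2 ∉ K) ∧
      (l.map (fun p => FreeDouble.incl K p.1 p.2)).prod = g ∧
      wordLength (FreeDouble.gens K) g = (l.map (fun p => p.2.norm)).sum := by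
  classical
  open FreeDoubleAux in
  set S := {n | ∃ l : List (FreeDouble K),
      (∀ x ∈ l, x ∈ FreeDouble.gens K ∨ x⁻¹ ∈ FreeDouble.gens K) ∧
      l.length = n ∧ l.prod = g} with hS
  have hSne : S.Nonempty := by
    obtain ⟨l₀, hl₀⟩ := FreeDoubleAux.exists_decomp K g
    obtain ⟨ltr, hmem, hlen, hprod⟩ := FreeDoubleAux.repr_list K l₀
    exact ⟨FreeDoubleAux.N l₀, ltr, hmem, hlen, by rw [hprod, hl₀]⟩
  have hmemS : sInf S ∈ S := Nat.sInf_mem hSne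
  obtain ⟨ltr, hmem, hlen, hprod⟩ := hmemS
  obtain ⟨l, hg, hp, hn⟩ := FreeDoubleAux.letters_good K ltr hmem
  have hPg : FreeDoubleAux.P K l = g := by rw [hp, hprod]
  obtain ⟨ltr', hmem', hlen', hprod'⟩ := FreeDoubleAux.repr_list K l
  have hNS : FreeDoubleAux.N l ∈ S := ⟨ltr', hmem', hlen', by rw [hprod', hPg]⟩
  have hle : sInf S ≤ FreeDoubleAux.N l := Nat.sInf_le hNS
  have hge : FreeDoubleAux.N l ≤ sInf S := by rw [← hlen]; exact hn
  refine ⟨l, hg.1, hg.2, hPg, ?_⟩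
  have : wordLength (FreeDouble.gens K) g = sInf S := rfl
  rw [this]
  exact le_antisymm hle hge
end

section
/- Let α be a finite type and F the free group on α. Say that g ∈ F is a prefix of k ∈ F if the reduced word of g is an initial segment of the reduced word of k. Let (K_n)_{n∈ℕ} be an increasing sequence of subgroups of F and (h_n)_{n≥1} a sequence of elements of F such that for every n: (i) h_{n+1} is a prefix of some element of K_{n+1}; (ii) h_{n+1} is not a prefix of any element of K_n; and (iii) for every g ∈ F that is not a prefix of any element of K_n one has |h_{n+1}| ≤ |g| + 1. Then every element of F is a prefix of some element of ⋃_n K_n. -/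
/-- `g` is a *prefix* of `k` in the free group if the reduced word of `g` is an initial
segment of the reduced word of `k`, i.e. `g` lies on the geodesic from `1` to `k`. -/
def FreeGroup.IsPrefix {α : Type*} [DecidableEq α] (g k : FreeGroup α) : Prop :=
  g.toWord <+: k.toWord

lemma freeGroup_finite_norm_le {α : Type*} [Fintype α] [DecidableEq α] (N : ℕ) :
    {x : FreeGroup α | x.norm ≤ N}.Finite := by
  have h := List.finite_length_le (α × Bool) N
  have : {x : FreeGroup α | x.norm ≤ N} ⊆ FreeGroup.toWord ⁻¹' {l | l.length ≤ N} := fun x hx => hx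
  exact (h.preimage (FreeGroup.toWord_injective.injOn)).subset this

/-- If `(K n)` is an increasing sequence of subgroups of a finitely generated free
group and the elements `h (n+1)` are prefix-minimizers: each `h (n+1)` is a prefix of
an element of `K (n+1)` but of no element of `K n`, and `|h (n+1)| ≤ |g| + 1` for
every `g` that is not a prefix of any element of `K n`, then every element of the
free group is a prefix of some element of `⋃ n, K n`. -/
theorem every_element_prefix_of_union {α : Type*} [Fintype α] [DecidableEq α]
    (K : ℕ → Subgroup (FreeGroup α)) (hK : Monotone K) (h : ℕ → FreeGroup α)
    (h1 : ∀ n : ℕ, ∃ k ∈ K (n + 1), (h (n + 1)).IsPrefix k)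
    (h2 : ∀ n : ℕ, ¬ ∃ k ∈ K n, (h (n + 1)).IsPrefix k)
    (h3 : ∀ n : ℕ, ∀ g : FreeGroup α,
      (¬ ∃ k ∈ K n, g.IsPrefix k) → (h (n + 1)).norm ≤ g.norm + 1) :
    ∀ g : FreeGroup α, ∃ n : ℕ, ∃ k ∈ K n, g.IsPrefix k := by
  intro g
  by_contra hg
  push_neg at hg
  -- g is never a prefix, so all h (n+1) have bounded norm
  set f : ℕ → FreeGroup α := fun n => h (n + 1) with hf
  have hbound : ∀ n, f n ∈ {x : FreeGroup α | x.norm ≤ g.norm + 1} := by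
    intro n
    apply h3 n
    rintro ⟨k, hk, hpre⟩
    exact hg n k hk hpre
  have hinj : Function.Injective f := by
    intro m n hmn
    by_contra hne
    wlog hlt : m < n generalizing m n
    · exact this hmn.symm (Ne.symm hne) (by omega)
    -- f m = h (m+1) is a prefix of some k ∈ K (m+1) ⊆ K n
    obtain ⟨k, hk, hpre⟩ := h1 m
    exact h2 n ⟨k, hK (by omega : m + 1 ≤ n) hk, (show h (m+1) = h (n+1) from hmn) ▸ hpre⟩
  exact (freeGroup_finite_norm_le (g.norm + 1)).not_infinite
    ((Set.infinite_range_of_injective hinj).mono (Set.range_subset_iff.2 hbound))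
end

section
/- Let α be a type and (R_n)_{n∈ℕ} an increasing sequence of subsets of the free group on α. Let G be the group presented by generators α and relators ⋃_n R_n, let G_n be the group presented by generators α and relators R_n, and let p_n : G_n → G be the natural surjective homomorphism (induced by the identity on the free group, which exists since R_n ⊆ ⋃_m R_m). Let H be a finitely presented group (i.e., H is isomorphic to a presented group with finitely many generators and finitely many relators) and let φ : H → G be any group homomorphism. Then there exist n ∈ ℕ and a homomorphism ψ : H → G_n with p_n ∘ ψ = φ. In particular, if φ is injective then ψ is injective, so every finitely presented subgroup of G embeds into some G_n. -/
/-- The natural homomorphism `G_n = ⟨α ∣ R n⟩ →* G = ⟨α ∣ ⋃ m, R m⟩` induced by the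
identity of the free group (it exists since `R n ⊆ ⋃ m, R m`). It is surjective. -/
def presentedGroupProj {α : Type*} (R : ℕ → Set (FreeGroup α)) (n : ℕ) :
    PresentedGroup (R n) →* PresentedGroup (⋃ m, R m) :=
  PresentedGroup.toGroup (f := fun a => (PresentedGroup.of a : PresentedGroup (⋃ m, R m)))
    (fun r hr => by
      have hlift : (FreeGroup.lift fun a => (PresentedGroup.of a :
          PresentedGroup (⋃ m, R m))) r = PresentedGroup.mk (⋃ m, R m) r := by
        congr 1
        ext a
        rfl
      rw [hlift]
      exact (QuotientGroup.eq_one_iff r).mpr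
        (Subgroup.subset_normalClosure (Set.mem_iUnion.mpr ⟨n, hr⟩)))

lemma presentedGroupProj_mk {α : Type*} (R : ℕ → Set (FreeGroup α)) (n : ℕ)
    (w : FreeGroup α) :
    presentedGroupProj R n (PresentedGroup.mk (R n) w) = PresentedGroup.mk (⋃ m, R m) w := by
  have : (presentedGroupProj R n).comp (PresentedGroup.mk (R n)) =
      PresentedGroup.mk (⋃ m, R m) := by
    apply FreeGroup.ext_hom
    intro a
    show presentedGroupProj R n (PresentedGroup.of a) = PresentedGroup.of a
    exact PresentedGroup.toGroup.of _
  exact DFunLike.congr_fun this w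

lemma normalClosure_iUnion_le {α : Type*} (R : ℕ → Set (FreeGroup α)) (hR : Monotone R)
    (w : FreeGroup α) (hw : w ∈ Subgroup.normalClosure (⋃ m, R m)) :
    ∃ n, w ∈ Subgroup.normalClosure (R n) := by
  have hdir : Directed (· ≤ ·) fun n => Subgroup.normalClosure (R n) :=
    fun i j => ⟨max i j, Subgroup.normalClosure_mono (hR (le_max_left i j)),
      Subgroup.normalClosure_mono (hR (le_max_right i j))⟩
  have hnormal : (⨆ n, Subgroup.normalClosure (R n)).Normal := by
    constructor
    intro x hx g
    obtain ⟨n, hn⟩ := (Subgroup.mem_iSup_of_directed hdir).mp hx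
    exact Subgroup.mem_iSup_of_directed hdir |>.mpr
      ⟨n, (Subgroup.normalClosure_normal).conj_mem x hn g⟩
  have hle : Subgroup.normalClosure (⋃ m, R m) ≤ ⨆ n, Subgroup.normalClosure (R n) :=
    Subgroup.normalClosure_le_normal (Set.iUnion_subset fun n x hx =>
      le_iSup (fun m => Subgroup.normalClosure (R m)) n (Subgroup.subset_normalClosure hx))
  exact (Subgroup.mem_iSup_of_directed hdir).mp (hle hw)

/-- Every homomorphism from a finitely presented group `H` to the direct limit
`G = ⟨α ∣ ⋃ n, R n⟩` of an increasing sequence of presentations lifts to some stage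
`G_n = ⟨α ∣ R n⟩`; moreover the lift is injective if the original map is. In
particular every finitely presented subgroup of `G` embeds into some `G_n`. -/
theorem finitelyPresented_hom_lifts {α : Type*} (R : ℕ → Set (FreeGroup α))
    (hR : Monotone R) {H : Type*} [Group H]
    (hfp : ∃ (β : Type) (_ : Finite β) (rels : Finset (FreeGroup β)),
      Nonempty (H ≃* PresentedGroup (rels : Set (FreeGroup β))))
    (φ : H →* PresentedGroup (⋃ m, R m)) :
    ∃ (n : ℕ) (ψ : H →* PresentedGroup (R n)),
      (presentedGroupProj R n).comp ψ = φ ∧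
        (Function.Injective φ → Function.Injective ψ) := by
  obtain ⟨β, hβ, rels, ⟨e⟩⟩ := hfp
  set φ' : PresentedGroup (rels : Set (FreeGroup β)) →* PresentedGroup (⋃ m, R m) :=
    φ.comp e.symm.toMonoidHom with hφ'
  -- choose lifts of generators
  have hsurj := PresentedGroup.mk_surjective (⋃ m, R m)
  choose f hf using fun b : β => hsurj (φ' (PresentedGroup.of b))
  -- the lift of each relator dies in G, hence in some normalClosure (R n)
  have key : ∀ r ∈ rels, ∃ n, FreeGroup.lift f r ∈ Subgroup.normalClosure (R n) := by
    intro r hr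
    apply normalClosure_iUnion_le R hR
    rw [← QuotientGroup.eq_one_iff]
    have hcomm : (PresentedGroup.mk (⋃ m, R m)).comp (FreeGroup.lift f) =
        φ'.comp (PresentedGroup.mk (rels : Set (FreeGroup β))) := by
      apply FreeGroup.ext_hom
      intro b
      simp
      exact hf b
    have : PresentedGroup.mk (⋃ m, R m) (FreeGroup.lift f r) =
        φ' (PresentedGroup.mk _ r) := DFunLike.congr_fun hcomm r
    have h1 : PresentedGroup.mk (rels : Set (FreeGroup β)) r = 1 :=
      (QuotientGroup.eq_one_iff r).mpr (Subgroup.subset_normalClosure hr)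
    show PresentedGroup.mk (⋃ m, R m) (FreeGroup.lift f r) = 1
    rw [this, h1, map_one]
  choose nr hnr using key
  -- take n large enough
  classical
  obtain ⟨n, hn⟩ : ∃ n, ∀ r (hr : r ∈ rels), nr r hr ≤ n := by
    refine ⟨rels.attach.sup fun x => nr x.1 x.2, fun r hr => ?_⟩
    exact Finset.le_sup (f := fun x : {x // x ∈ rels} => nr x.1 x.2)
      (Finset.mem_attach _ ⟨r, hr⟩)
  have hrel : ∀ r ∈ (rels : Set (FreeGroup β)),
      (FreeGroup.lift fun b => PresentedGroup.mk (R n) (f b)) r = 1 := by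
    intro r hr
    have hcomm : (FreeGroup.lift fun b => PresentedGroup.mk (R n) (f b)) =
        (PresentedGroup.mk (R n)).comp (FreeGroup.lift f) := by
      apply FreeGroup.ext_hom
      intro b
      simp
    rw [hcomm]
    simp only [MonoidHom.comp_apply]
    exact (QuotientGroup.eq_one_iff _).mpr
      (Subgroup.normalClosure_mono (hR (hn r hr)) (hnr r hr))
  set ψ0 : PresentedGroup (rels : Set (FreeGroup β)) →* PresentedGroup (R n) :=
    PresentedGroup.toGroup hrel with hψ0
  refine ⟨n, ψ0.comp e.toMonoidHom, ?_, ?_⟩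
  · have hcomp : (presentedGroupProj R n).comp ψ0 = φ' := by
      apply PresentedGroup.ext
      intro b
      have h1 : ψ0 (PresentedGroup.of b) = PresentedGroup.mk (R n) (f b) :=
        PresentedGroup.toGroup.of hrel
      simp only [MonoidHom.comp_apply, h1]
      rw [presentedGroupProj_mk]
      exact hf b
    ext h
    have := DFunLike.congr_fun hcomp (e h)
    simpa [hφ'] using this
  · intro hinj
    have : Function.Injective ((presentedGroupProj R n).comp (ψ0.comp e.toMonoidHom)) := by
      intro a b hab
      apply hinj
      have hcomp : (presentedGroupProj R n).comp ψ0 = φ' := by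
        apply PresentedGroup.ext
        intro b
        have h1 : ψ0 (PresentedGroup.of b) = PresentedGroup.mk (R n) (f b) :=
          PresentedGroup.toGroup.of hrel
        simp only [MonoidHom.comp_apply, h1]
        rw [presentedGroupProj_mk]
        exact hf b
      have ha := DFunLike.congr_fun hcomp (e a)
      have hb := DFunLike.congr_fun hcomp (e b)
      simp only [MonoidHom.comp_apply] at ha hb
      have hab' : (presentedGroupProj R n) (ψ0 (e a)) =
          (presentedGroupProj R n) (ψ0 (e b)) := hab
      rw [ha, hb] at hab'
      simpa [hφ'] using hab'
    exact fun a b hab => this (by simp only [MonoidHom.comp_apply, hab])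
end
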